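/- Under the principal series representation π_λ of U_q(sl₂) on functions of z (with π_λ(K), π_λ(E), π_λ(F) given by the explicit difference-multiplication operators), the quantum Casimir Ω = qK + q^{−1}K^{−1} + (q−q^{−1})² FE acts as the scalar −2cosh(2πλ/w₂); that is, π_λ(Ω) f = −2cosh(2πλ/w₂) f for every function f. -/

import Mathlib

open Complex Real

private lemma casimir_aux (s a E X Y Z D : ℂ)
    (hs : s ≠ 0) (ha : a ≠ 0) (hE : E ≠ 0) (hD : D ≠ 0) :
    s ^ 2 * Y + (s ^ 2)⁻¹ * Z + D ^ 2 * (-(s / D) * E⁻¹ *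
      (s⁻¹ * a * (s / D * E * (s⁻¹ * a * X + s * a⁻¹ * Y)) +
       s * a⁻¹ * (s / D * (E / (s ^ 2) ^ 2) * (s⁻¹ * a * Z + s * a⁻¹ * X)))) =
      -2 * ((a ^ 2 + (a⁻¹) ^ 2) / 2) * X := by
  have hgood : D * (s / D) = s := by
    rw [mul_div_assoc', mul_comm, mul_div_assoc, div_self hD, mul_one]
  have step : D ^ 2 * (-(s / D) * E⁻¹ *
      (s⁻¹ * a * (s / D * E * (s⁻¹ * a * X + s * a⁻¹ * Y)) +
       s * a⁻¹ * (s / D * (E / (s ^ 2) ^ 2) * (s⁻¹ * a * Z + s * a⁻¹ * X))))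
      = -((D * (s / D)) ^ 2 * (E⁻¹ *
      (s⁻¹ * a * (E * (s⁻¹ * a * X + s * a⁻¹ * Y)) +
       s * a⁻¹ * ((E / (s ^ 2) ^ 2) * (s⁻¹ * a * Z + s * a⁻¹ * X))))) := by ring
  rw [step, hgood]
  field_simp
  have h7 : s ^ 7 * s⁻¹ ^ 7 = 1 := by rw [← mul_pow, mul_inv_cancel₀ hs, one_pow]
  have h3a : a ^ 3 * a⁻¹ ^ 3 = 1 := by rw [← mul_pow, mul_inv_cancel₀ ha, one_pow]
  have hEE : E * E⁻¹ = 1 := mul_inv_cancel₀ hE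
  ring

/-- Under the principal series representation the quantum Casimir
Ω = qK + q⁻¹K⁻¹ + (q−q⁻¹)²FE acts as the scalar −2cosh(2πλ/w₂). -/
theorem casimir_acts_as_scalar
    (w1 w2 : ℝ) (hw1 : 0 < w1) (hw2 : 0 < w2) (lam : ℂ)
    (sq : ℂ) (hsq : sq = Complex.exp (π * I * w1 / (2 * w2)))
    (q : ℂ) (hq : q = sq ^ 2) (hq2 : q ^ 2 ≠ 1)
    (piK piKinv piE piF : (ℂ → ℂ) → (ℂ → ℂ))
    (hK : ∀ f z, piK f z = f (z + I * w1))
    (hKinv : ∀ f z, piKinv f z = f (z - I * w1))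
    (hE : ∀ f z, piE f z = (sq / (q - q⁻¹)) * Complex.exp (2 * π * z / w2) *
      (sq⁻¹ * Complex.exp (π * lam / w2) * f z +
       sq * Complex.exp (-(π * lam) / w2) * f (z + I * w1)))
    (hF : ∀ f z, piF f z = -(sq / (q - q⁻¹)) * Complex.exp (-(2 * π * z) / w2) *
      (sq⁻¹ * Complex.exp (π * lam / w2) * f z +
       sq * Complex.exp (-(π * lam) / w2) * f (z - I * w1))) :
    ∀ f : ℂ → ℂ, ∀ z : ℂ,
      q * piK f z + q⁻¹ * piKinv f z + (q - q⁻¹) ^ 2 * piF (piE f) z =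
        -2 * Complex.cosh (2 * π * lam / w2) * f z := by
  intro f z
  have hw2' : (w2 : ℂ) ≠ 0 := by exact_mod_cast hw2.ne'
  have hsq0 : sq ≠ 0 := by rw [hsq]; exact Complex.exp_ne_zero _
  have hq0 : q ≠ 0 := by rw [hq]; exact pow_ne_zero _ hsq0
  have hd : q - q⁻¹ ≠ 0 := by
    intro h
    apply hq2
    have h' := sub_eq_zero.mp h
    rw [pow_two]
    nth_rewrite 2 [h']
    exact mul_inv_cancel₀ hq0
  have hzz : z - I * w1 + I * w1 = z := by ring
  have hab : Complex.exp (↑π * lam / ↑w2) * Complex.exp (-(↑π * lam) / ↑w2) = 1 := by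
    rw [← Complex.exp_add, ← Complex.exp_zero]
    congr 1
    ring
  have hEsub : Complex.exp (2 * ↑π * (z - I * ↑w1) / ↑w2) * q ^ 2
      = Complex.exp (2 * ↑π * z / ↑w2) := by
    rw [hq, hsq, ← pow_mul, ← Complex.exp_nat_mul, ← Complex.exp_add]
    congr 1
    field_simp
    ring
  have hcosh : Complex.cosh (2 * ↑π * lam / ↑w2)
      = (Complex.exp (↑π * lam / ↑w2) ^ 2 + Complex.exp (-(↑π * lam) / ↑w2) ^ 2) / 2 := by
    rw [Complex.cosh, ← Complex.exp_nat_mul, ← Complex.exp_nat_mul]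
    push_cast
    ring_nf
  rw [hK, hKinv, hF, hE, hE, hzz, hcosh]
  set a := Complex.exp (↑π * lam / ↑w2) with ha
  set b := Complex.exp (-(↑π * lam) / ↑w2) with hbdef
  set E := Complex.exp (2 * ↑π * z / ↑w2) with hEdef
  set E' := Complex.exp (2 * ↑π * (z - I * ↑w1) / ↑w2) with hE'def
  set Em := Complex.exp (-(2 * ↑π * z) / ↑w2) with hEmdef
  have ha0 : a ≠ 0 := Complex.exp_ne_zero _
  have hE0 : E ≠ 0 := Complex.exp_ne_zero _
  have hEm0 : E * Em = 1 := by
    rw [hEdef, hEmdef, ← Complex.exp_add, ← Complex.exp_zero]; congr 1; ring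
  have hb : b = a⁻¹ := eq_inv_of_mul_eq_one_left (by rw [mul_comm]; exact hab)
  have hEm : Em = E⁻¹ := eq_inv_of_mul_eq_one_left (by rw [mul_comm]; exact hEm0)
  have hE' : E' = E / q ^ 2 := by rw [eq_div_iff (pow_ne_zero 2 hq0), hEsub]
  rw [hE', hb, hEm, hq] at *
  linear_combination casimir_aux sq a E (f z) (f (z + I * ↑w1)) (f (z - I * ↑w1))
    (sq ^ 2 - (sq ^ 2)⁻¹) hsq0 ha0 hE0 hd
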